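/- Let $k \ge 1$, and let $\rho_1, \dots, \rho_k > 0$ with $\sum_{j=1}^k \rho_j < 1$. Define $f(\rho) = \sum_{i=1}^k \frac{1}{(1 - \sum_{j=1}^i \rho_j)(1 - \sum_{j=1}^{i-1} \rho_j)}$. If $\sigma$ is any permutation of $\{1,\dots,k\}$ and $\rho_1 \le \rho_2 \le \dots \le \rho_k$, then $f(\rho_1,\dots,\rho_k) \le f(\rho_{\sigma(1)},\dots,\rho_{\sigma(k)})$. -/

import Mathlib

open List Finset

/-- Recursive form of the PAoI sum, with running "remaining capacity" `c`. -/
noncomputable def paoiG (c : ℝ) : List ℝ → ℝ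
  | [] => 0
  | x :: xs => 1 / ((c - x) * c) + paoiG (c - x) xs

lemma paoiG_swap {c x y : ℝ} (l : List ℝ) (hy : 0 < y) (hyx : y ≤ x)
    (hc : 0 < c - x - y) :
    paoiG c (y :: x :: l) ≤ paoiG c (x :: y :: l) := by
  have hx : 0 < x := hy.trans_le hyx
  have h1 : 0 < c - x := by linarith
  have h2 : 0 < c - y := by linarith
  have h3 : 0 < c := by linarith
  simp only [paoiG]
  have e : c - y - x = c - x - y := by ring
  rw [e]
  have expand : (1/((c-x)*c) + 1/((c-x-y)*(c-x))) - (1/((c-y)*c) + 1/((c-x-y)*(c-y)))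
      = (x-y)*(1/c + 1/(c-x-y))/((c-x)*(c-y)) := by
    field_simp
    ring
  have hnn : 0 ≤ (x-y)*(1/c + 1/(c-x-y))/((c-x)*(c-y)) := by
    apply div_nonneg _ (mul_pos h1 h2).le
    exact mul_nonneg (by linarith) (add_pos (one_div_pos.2 h3) (one_div_pos.2 hc)).le
  linarith

lemma paoiG_move_front {x : ℝ} (hx : 0 < x) :
    ∀ (l₁ : List ℝ) {c : ℝ} (l₂ : List ℝ), (∀ a ∈ l₁, x ≤ a) → (∀ a ∈ l₁, 0 < a) →
      x + l₁.sum < c →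
      paoiG c (x :: (l₁ ++ l₂)) ≤ paoiG c (l₁ ++ x :: l₂) := by
  intro l₁
  induction l₁ with
  | nil => intro c l₂ _ _ _; simp
  | cons a t ih =>
    intro c l₂ hle hpos hsum
    have hxa : x ≤ a := hle a (by simp)
    have hta : ∀ b ∈ t, x ≤ b := fun b hb => hle b (by simp [hb])
    have htp : ∀ b ∈ t, 0 < b := fun b hb => hpos b (by simp [hb])
    have htsum : 0 ≤ t.sum := List.sum_nonneg fun b hb => (htp b hb).le
    have hsum' : x + a + t.sum < c := by simp at hsum; linarith
    calc paoiG c (x :: ((a :: t) ++ l₂)) = paoiG c (x :: a :: (t ++ l₂)) := by simp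
      _ ≤ paoiG c (a :: x :: (t ++ l₂)) := by
          apply paoiG_swap _ hx hxa; linarith
      _ = 1 / ((c - a) * c) + paoiG (c - a) (x :: (t ++ l₂)) := by simp [paoiG]
      _ ≤ 1 / ((c - a) * c) + paoiG (c - a) (t ++ x :: l₂) := by
          have := ih (c := c - a) l₂ hta htp (by linarith)
          linarith
      _ = paoiG c ((a :: t) ++ x :: l₂) := by simp [paoiG]

lemma paoiG_sorted_le : ∀ (l₀ l : List ℝ) {c : ℝ}, l₀.Perm l → l₀.Pairwise (· ≤ ·) →
    (∀ y ∈ l, 0 < y) → l.sum < c → paoiG c l₀ ≤ paoiG c l := by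
  intro l₀
  induction l₀ with
  | nil => intro l c hperm _ _ _; rw [hperm.nil_eq]
  | cons x t ih =>
    intro l c hperm hsorted hpos hsum
    have hxl : x ∈ l := hperm.mem_iff.1 (by simp)
    obtain ⟨l₁, l₂, rfl⟩ := List.append_of_mem hxl
    have hxpos : 0 < x := hpos x hxl
    have hxle : ∀ a ∈ l₁ ++ l₂, x ≤ a := by
      intro a ha
      have hmem : a ∈ x :: t := hperm.mem_iff.2 (by
        rcases List.mem_append.1 ha with h | h
        · exact List.mem_append.2 (Or.inl h)
        · exact List.mem_append.2 (Or.inr (List.mem_cons_of_mem _ h)))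
      rcases List.mem_cons.1 hmem with rfl | h
      · exact le_rfl
      · exact (List.pairwise_cons.1 hsorted).1 a h
    have hl₁le : ∀ a ∈ l₁, x ≤ a := fun a ha => hxle a (List.mem_append.2 (Or.inl ha))
    have hl₁pos : ∀ a ∈ l₁, 0 < a := fun a ha =>
      hpos a (List.mem_append.2 (Or.inl ha))
    have hl₂pos : ∀ a ∈ l₂, 0 < a := fun a ha =>
      hpos a (List.mem_append.2 (Or.inr (List.mem_cons_of_mem _ ha)))
    have hsums : l₁.sum + x + l₂.sum < c := by
      have h := hsum; simp [List.sum_append] at h; linarith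
    have hl₂sum : 0 ≤ l₂.sum := List.sum_nonneg fun b hb => (hl₂pos b hb).le
    have step1 : paoiG c (x :: (l₁ ++ l₂)) ≤ paoiG c (l₁ ++ x :: l₂) :=
      paoiG_move_front hxpos l₁ l₂ hl₁le hl₁pos (by linarith)
    have hperm' : t.Perm (l₁ ++ l₂) := by
      have h2 : (x :: t).Perm (x :: (l₁ ++ l₂)) := hperm.trans List.perm_middle
      exact (List.perm_cons x).1 h2
    have step2 : paoiG (c - x) t ≤ paoiG (c - x) (l₁ ++ l₂) := by
      apply ih _ hperm' (List.pairwise_cons.1 hsorted).2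
      · intro y hy
        rcases List.mem_append.1 hy with h | h
        · exact hl₁pos y h
        · exact hl₂pos y h
      · rw [List.sum_append]; linarith
    calc paoiG c (x :: t) = 1 / ((c - x) * c) + paoiG (c - x) t := by simp [paoiG]
      _ ≤ 1 / ((c - x) * c) + paoiG (c - x) (l₁ ++ l₂) := by linarith
      _ = paoiG c (x :: (l₁ ++ l₂)) := by simp [paoiG]
      _ ≤ _ := step1

lemma paoiG_eq_take : ∀ (l : List ℝ) (c : ℝ),
    paoiG c l = ∑ i ∈ Finset.range l.length,
      1 / ((c - (l.take (i+1)).sum) * (c - (l.take i).sum)) := by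
  intro l
  induction l with
  | nil => intro c; simp [paoiG]
  | cons x xs ih =>
    intro c
    rw [List.length_cons, Finset.sum_range_succ']
    simp only [List.take_succ_cons, List.sum_cons, List.take_zero, List.sum_nil]
    rw [paoiG, ih (c - x), add_comm]
    congr 1
    · apply Finset.sum_congr rfl
      intro i _
      congr 1
      ring
    · congr 1
      ring

lemma paoiG_eq_sum {k : ℕ} (a : Fin k → ℝ) :
    paoiG 1 (List.ofFn a)
      = ∑ i : Fin k, 1 / ((1 - ∑ j ∈ Finset.Iic i, a j) * (1 - ∑ j ∈ Finset.Iio i, a j)) := by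
  rw [paoiG_eq_take, List.length_ofFn, ← Fin.sum_univ_eq_sum_range]
  apply Finset.sum_congr rfl
  intro i _
  rw [List.sum_take_ofFn, List.sum_take_ofFn]
  have h1 : (Finset.univ.filter fun j : Fin k => j.val < i.val + 1) = Finset.Iic i := by
    ext j; simp only [Finset.mem_filter, Finset.mem_univ, true_and, Finset.mem_Iic, Fin.le_def, Nat.lt_succ_iff]
  have h2 : (Finset.univ.filter fun j : Fin k => j.val < i.val) = Finset.Iio i := by
    ext j; simp only [Finset.mem_filter, Finset.mem_univ, true_and, Finset.mem_Iio, Fin.lt_def]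
  rw [h1, h2]

theorem stmt_10 (k : ℕ) (hk : 1 ≤ k) (ρ : Fin k → ℝ)
    (hpos : ∀ i, 0 < ρ i) (hsum : ∑ i, ρ i < 1) (hmono : Monotone ρ)
    (σ : Equiv.Perm (Fin k)) :
    ∑ i : Fin k, 1 / ((1 - ∑ j ∈ Finset.Iic i, ρ j) * (1 - ∑ j ∈ Finset.Iio i, ρ j))
      ≤ ∑ i : Fin k, 1 / ((1 - ∑ j ∈ Finset.Iic i, ρ (σ j)) *
          (1 - ∑ j ∈ Finset.Iio i, ρ (σ j))) := by
  have key := paoiG_sorted_le (List.ofFn ρ) (List.ofFn (ρ ∘ σ)) (c := 1)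
    (Equiv.Perm.ofFn_comp_perm σ ρ).symm
    (by rw [← List.sortedLE_iff_pairwise, List.sortedLE_ofFn_iff]; exact hmono)
    (by intro y hy; rw [List.mem_ofFn] at hy; obtain ⟨i, rfl⟩ := hy; exact hpos _)
    (by rw [List.sum_ofFn]
        show ∑ i, ρ (σ i) < 1
        rw [Equiv.sum_comp σ ρ]; exact hsum)
  rw [paoiG_eq_sum, paoiG_eq_sum] at key
  simpa using key
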